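/- Uniform bound for the critical Duhamel integral: sup_{t>0} (1+t) ∫₀ᵗ (1+t−s)^{−1} (t−s)^{−1/2} (1+s)^{−1} ds < ∞. -/

import Mathlib

open Real MeasureTheory Set intervalIntegral

noncomputable def duhamelPhi (u : ℝ) : ℝ := u ^ (-(1/2 : ℝ)) * (1 + u)⁻¹

lemma duhamelPhi_nonneg {u : ℝ} (hu : 0 ≤ u) : 0 ≤ duhamelPhi u := by
  unfold duhamelPhi
  have h1 : (0:ℝ) ≤ u ^ (-(1/2 : ℝ)) := Real.rpow_nonneg hu _
  have h2 : (0:ℝ) ≤ (1 + u)⁻¹ := by positivity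
  positivity

lemma duhamelPhi_measurable : Measurable duhamelPhi := by
  unfold duhamelPhi
  fun_prop

lemma duhamelPhi_int {t : ℝ} (ht : 0 ≤ t) : IntervalIntegrable duhamelPhi volume 0 t := by
  have hg : IntervalIntegrable (fun u : ℝ => u ^ (-(1/2 : ℝ))) volume 0 t :=
    intervalIntegral.intervalIntegrable_rpow' (by norm_num)
  refine hg.mono_fun' duhamelPhi_measurable.aestronglyMeasurable ?_
  rw [uIoc_of_le ht]
  filter_upwards [ae_restrict_mem measurableSet_Ioc] with u hu
  have hu0 : 0 < u := hu.1
  rw [Real.norm_eq_abs, abs_of_nonneg (duhamelPhi_nonneg hu0.le)]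
  unfold duhamelPhi
  have h1 : (1 + u)⁻¹ ≤ 1 := by
    rw [inv_le_one_iff₀]; right; linarith
  calc u ^ (-(1/2 : ℝ)) * (1 + u)⁻¹ ≤ u ^ (-(1/2 : ℝ)) * 1 := by
        apply mul_le_mul_of_nonneg_left h1 (Real.rpow_nonneg hu0.le _)
    _ = u ^ (-(1/2 : ℝ)) := mul_one _

lemma duhamelPhi_integral_le {t : ℝ} (ht : 0 ≤ t) :
    (∫ u in (0:ℝ)..t, duhamelPhi u) ≤ π := by
  rcases eq_or_lt_of_le ht with rfl | ht'
  · simp [Real.pi_pos.le]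
  · have hcont : ContinuousOn (fun u : ℝ => 2 * Real.arctan (Real.sqrt u)) (Icc 0 t) :=
      (continuous_const.mul (Real.continuous_arctan.comp Real.continuous_sqrt)).continuousOn
    have hderiv : ∀ u ∈ Ioo (0:ℝ) t,
        HasDerivAt (fun u : ℝ => 2 * Real.arctan (Real.sqrt u)) (duhamelPhi u) u := by
      intro u hu
      have hu0 : 0 < u := hu.1
      have hs : 0 < Real.sqrt u := Real.sqrt_pos.mpr hu0
      have h1 := Real.hasDerivAt_sqrt hu0.ne'
      have h2 := Real.hasDerivAt_arctan (Real.sqrt u)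
      have h3 := (h2.comp u h1).const_mul (2:ℝ)
      refine h3.congr_deriv ?_
      symm
      unfold duhamelPhi
      rw [Real.sq_sqrt hu0.le, Real.rpow_neg hu0.le, ← Real.sqrt_eq_rpow]
      have h1u : (0:ℝ) < 1 + u := by linarith
      field_simp
    have key := intervalIntegral.integral_eq_sub_of_hasDerivAt_of_le ht hcont hderiv
      (duhamelPhi_int ht)
    rw [key]
    have h4 : Real.arctan (Real.sqrt t) ≤ π / 2 := (Real.arctan_lt_pi_div_two _).le
    have h5 : Real.arctan (Real.sqrt 0) = 0 := by simp
    rw [h5]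
    linarith

/-- Uniform bound for the critical Duhamel integral. -/
theorem uniform_bound_critical_duhamel_integral :
    ∃ C : ℝ, ∀ t : ℝ, 0 < t →
      (1 + t) * (∫ s in (0:ℝ)..t, (1 + t - s)⁻¹ * (t - s) ^ (-(1/2 : ℝ)) * (1 + s)⁻¹) ≤ C := by
  refine ⟨3 * π, fun t ht => ?_⟩
  set g : ℝ → ℝ := fun s => (1 + t) * ((1 + t - s)⁻¹ * (t - s) ^ (-(1/2 : ℝ)) * (1 + s)⁻¹)
    with hg_def
  set G : ℝ → ℝ := fun s => duhamelPhi s + 2 * duhamelPhi (t - s) with hG_def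
  -- integrability of G
  have hphit : IntervalIntegrable duhamelPhi volume 0 t := duhamelPhi_int ht.le
  have hphic : IntervalIntegrable (fun s => duhamelPhi (t - s)) volume 0 t := by
    have := hphit.comp_sub_left t
    simpa using this.symm
  have hGint : IntervalIntegrable G volume 0 t := hphit.add (hphic.const_mul 2)
  -- pointwise bound on Ioc 0 t
  have hle : ∀ s ∈ Ioc (0:ℝ) t, g s ≤ G s := by
    intro s hs
    obtain ⟨hs0, hst⟩ := hs
    have h1s : (0:ℝ) < 1 + s := by linarith
    have h1ts : (0:ℝ) < 1 + t - s := by linarith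
    have hGnn : 0 ≤ G s := by
      have := duhamelPhi_nonneg hs0.le
      have := duhamelPhi_nonneg (u := t - s) (by linarith)
      simp only [hG_def]
      linarith
    rcases eq_or_lt_of_le hst with rfl | hst'
    · have : (s - s : ℝ) ^ (-(1/2 : ℝ)) = 0 := by
        rw [sub_self, Real.zero_rpow (by norm_num)]
      simp only [hg_def, this]
      calc (1 + s) * ((1 + s - s)⁻¹ * 0 * (1 + s)⁻¹) = 0 := by ring
        _ ≤ G s := hGnn
    · have hts : (0:ℝ) < t - s := by linarith
      have hrnn : (0:ℝ) ≤ (t - s) ^ (-(1/2 : ℝ)) := Real.rpow_nonneg hts.le _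
      -- step 1 : g s ≤ T1 + phi (t-s) where T1 = (t-s)^(-1/2) * (1+s)⁻¹
      have step1 : g s ≤ (t - s) ^ (-(1/2 : ℝ)) * (1 + s)⁻¹ + duhamelPhi (t - s) := by
        have hsum : (1 + t : ℝ) ≤ (1 + s) + (1 + (t - s)) := by linarith
        have hmono : g s ≤ ((1 + s) + (1 + (t - s))) *
            ((1 + t - s)⁻¹ * (t - s) ^ (-(1/2 : ℝ)) * (1 + s)⁻¹) := by
          apply mul_le_mul_of_nonneg_right hsum
          positivity
        refine hmono.trans_eq ?_
        unfold duhamelPhi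
        have e1 : (1 + t - s : ℝ) = 1 + (t - s) := by ring
        rw [e1]
        field_simp
        ring
      -- step 2 : T1 ≤ phi s + phi (t - s)
      have step2 : (t - s) ^ (-(1/2 : ℝ)) * (1 + s)⁻¹ ≤ duhamelPhi s + duhamelPhi (t - s) := by
        rcases le_total s (t - s) with hcase | hcase
        · have hr : (t - s) ^ (-(1/2 : ℝ)) ≤ s ^ (-(1/2 : ℝ)) :=
            Real.rpow_le_rpow_of_nonpos hs0 hcase (by norm_num)
          have : (t - s) ^ (-(1/2 : ℝ)) * (1 + s)⁻¹ ≤ duhamelPhi s := by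
            unfold duhamelPhi
            apply mul_le_mul_of_nonneg_right hr (by positivity)
          linarith [duhamelPhi_nonneg (u := t - s) hts.le]
        · have h1ts' : (0:ℝ) < 1 + (t - s) := by linarith
          have hr : (1 + s)⁻¹ ≤ (1 + (t - s))⁻¹ := by
            apply inv_anti₀ h1ts' (by linarith)
          have : (t - s) ^ (-(1/2 : ℝ)) * (1 + s)⁻¹ ≤ duhamelPhi (t - s) := by
            unfold duhamelPhi
            apply mul_le_mul_of_nonneg_left hr hrnn
          linarith [duhamelPhi_nonneg hs0.le]
      simp only [hG_def]
      linarith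
  -- integrability of g
  have hgmeas : Measurable g := by
    simp only [hg_def]
    fun_prop
  have hgint : IntervalIntegrable g volume 0 t := by
    refine hGint.mono_fun' hgmeas.aestronglyMeasurable ?_
    rw [uIoc_of_le ht.le]
    filter_upwards [ae_restrict_mem measurableSet_Ioc] with s hs
    have hgnn : 0 ≤ g s := by
      have h1s : (0:ℝ) < 1 + s := by linarith [hs.1]
      have h1ts : (0:ℝ) ≤ 1 + t - s := by linarith [hs.2]
      have hts : (0:ℝ) ≤ t - s := by linarith [hs.2]
      have hrnn : (0:ℝ) ≤ (t - s) ^ (-(1/2 : ℝ)) := Real.rpow_nonneg hts _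
      simp only [hg_def]
      positivity
    rw [Real.norm_eq_abs, abs_of_nonneg hgnn]
    exact hle s hs
  -- a.e. bound on Icc
  have hae : g ≤ᵐ[volume.restrict (Icc (0:ℝ) t)] G := by
    have hne : ∀ᵐ s : ℝ ∂volume, s ≠ 0 := by
      rw [ae_iff]
      have : {s : ℝ | ¬ s ≠ 0} = {0} := by ext; simp
      rw [this]
      exact measure_singleton 0
    filter_upwards [ae_restrict_mem measurableSet_Icc, ae_restrict_of_ae hne] with s hs hs0
    exact hle s ⟨lt_of_le_of_ne hs.1 (Ne.symm hs0), hs.2⟩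
  -- compute: the conclusion
  have hGval : (∫ s in (0:ℝ)..t, G s) ≤ 3 * π := by
    have hsplit : (∫ s in (0:ℝ)..t, G s) =
        (∫ s in (0:ℝ)..t, duhamelPhi s) + ∫ s in (0:ℝ)..t, 2 * duhamelPhi (t - s) :=
      intervalIntegral.integral_add hphit (hphic.const_mul 2)
    have hc : (∫ s in (0:ℝ)..t, duhamelPhi (t - s)) = ∫ u in (0:ℝ)..t, duhamelPhi u := by
      have := intervalIntegral.integral_comp_sub_left duhamelPhi (a := 0) (b := t) t
      simpa using this
    have h2 : (∫ s in (0:ℝ)..t, 2 * duhamelPhi (t - s)) =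
        2 * ∫ s in (0:ℝ)..t, duhamelPhi (t - s) := intervalIntegral.integral_const_mul _ _
    rw [hsplit, h2, hc]
    linarith [duhamelPhi_integral_le ht.le]
  calc (1 + t) * (∫ s in (0:ℝ)..t, (1 + t - s)⁻¹ * (t - s) ^ (-(1/2 : ℝ)) * (1 + s)⁻¹)
      = ∫ s in (0:ℝ)..t, g s := (intervalIntegral.integral_const_mul _ _).symm
    _ ≤ ∫ s in (0:ℝ)..t, G s :=
        intervalIntegral.integral_mono_ae_restrict ht.le hgint hGint hae
    _ ≤ 3 * π := hGval
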